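/- (Closed-form recovery of latent forward and backward transition probabilities from expected transition counts.) Let w : X×A → [0,∞) be weights with W(s,a) := Σ_{x∈f⁻¹(s)} w(x,a) > 0 for all (s,a) ∈ S×A, and define N_a(x,y) := w(x,a)·q(y|f(y))·p(f(y)|f(x),a) and, for subsets X', Y' ⊆ X, N_a(X',Y') := Σ_{x∈X', y∈Y'} N_a(x,y). Then for all (s,a,s') ∈ S×A×S: (a) p(s'|s,a) = N_a( f⁻¹(s), f⁻¹(s') ) / N_a( f⁻¹(s), X ); and (b) with m(s,a) := W(s,a) / Σ_{(s̃,ã)∈S×A} W(s̃,ã), the backward probability satisfies m(s,a)·p(s'|s,a) / Σ_{(s̃,ã)∈S×A} m(s̃,ã)·p(s'|s̃,ã) = N_a( f⁻¹(s), f⁻¹(s') ) / Σ_{ã∈A} N_ã( X, f⁻¹(s') ). -/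
import Mathlib


open Finset

/-- **Closed-form recovery of latent forward and backward transition probabilities from
expected transition counts.**
`p s a s' = p(s'|s,a)`, `q s y = q(y|s)` (supported on the fibers of `f`),
`w x a ≥ 0` are weights with `W s a = Σ_{x ∈ f⁻¹(s)} w x a > 0`, the expected counts
are `N_a(x,y) = w(x,a)·q(y|f(y))·p(f(y)|f(x),a)`, and
`m(s,a) = W(s,a)/Σ_{s̃,ã} W(s̃,ã)`. -/
theorem latent_transitions_from_expected_counts
    {X S A : Type*} [Fintype X] [Fintype S] [Fintype A] [DecidableEq S]
    (f : X → S) (hf : Function.Surjective f)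
    (p : S → A → S → ℝ) (hp : ∀ s a, (∀ s', 0 < p s a s') ∧ ∑ s', p s a s' = 1)
    (q : S → X → ℝ)
    (hq : ∀ s, (∀ y, 0 ≤ q s y) ∧ (∀ y, f y ≠ s → q s y = 0) ∧ ∑ y, q s y = 1)
    (w : X → A → ℝ) (hw : ∀ x a, 0 ≤ w x a)
    (W : S → A → ℝ)
    (hW : ∀ (s : S) (a : A), W s a = ∑ x ∈ Finset.univ.filter (fun x => f x = s), w x a)
    (hWpos : ∀ (s : S) (a : A), 0 < W s a)
    (Nc : A → X → X → ℝ)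
    (hNc : ∀ a x y, Nc a x y = w x a * (q (f y) y * p (f x) a (f y)))
    (m : S → A → ℝ)
    (hm : ∀ (s : S) (a : A), m s a = W s a / ∑ s2 : S, ∑ a2 : A, W s2 a2)
    (s : S) (a : A) (s' : S) :
    p s a s'
      = (∑ x ∈ Finset.univ.filter (fun x => f x = s),
          ∑ y ∈ Finset.univ.filter (fun y => f y = s'), Nc a x y)
        / (∑ x ∈ Finset.univ.filter (fun x => f x = s), ∑ y : X, Nc a x y)
    ∧
    m s a * p s a s' / (∑ s2 : S, ∑ a2 : A, m s2 a2 * p s2 a2 s')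
      = (∑ x ∈ Finset.univ.filter (fun x => f x = s),
          ∑ y ∈ Finset.univ.filter (fun y => f y = s'), Nc a x y)
        / (∑ a2 : A, ∑ x : X, ∑ y ∈ Finset.univ.filter (fun y => f y = s'), Nc a2 x y) := by
  have hq1 : ∀ s' : S, ∑ y ∈ Finset.univ.filter (fun y => f y = s'), q s' y = 1 := by
    intro s'
    rw [← (hq s').2.2]
    refine Finset.sum_subset (Finset.filter_subset _ _) ?_
    intro y _ hy
    exact (hq s').2.1 y (by simpa using hy)
  have hNfib : ∀ (a : A) (s s' : S),
      (∑ x ∈ Finset.univ.filter (fun x => f x = s),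
        ∑ y ∈ Finset.univ.filter (fun y => f y = s'), Nc a x y) = W s a * p s a s' := by
    intro a s s'
    rw [hW, Finset.sum_mul]
    refine Finset.sum_congr rfl ?_
    intro x hx
    have hfx : f x = s := by simpa using hx
    have h1 : ∀ y ∈ Finset.univ.filter (fun y => f y = s'),
        Nc a x y = w x a * p s a s' * q s' y := by
      intro y hy
      have hfy : f y = s' := by simpa using hy
      rw [hNc, hfx, hfy]; ring
    rw [Finset.sum_congr rfl h1, ← Finset.mul_sum, hq1, mul_one]
  have hNrow : ∀ (a : A) (s : S),
      (∑ x ∈ Finset.univ.filter (fun x => f x = s), ∑ y : X, Nc a x y) = W s a := by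
    intro a s
    have h1 : ∀ x : X, (∑ y : X, Nc a x y)
        = ∑ s' : S, ∑ y ∈ Finset.univ.filter (fun y => f y = s'), Nc a x y := by
      intro x; rw [Finset.sum_fiberwise]
    simp_rw [h1]
    rw [Finset.sum_comm, Finset.sum_congr rfl (fun s' _ => hNfib a s s'),
      ← Finset.mul_sum, (hp s a).2, mul_one]
  have hNcol : ∀ (a2 : A) (s' : S),
      (∑ x : X, ∑ y ∈ Finset.univ.filter (fun y => f y = s'), Nc a2 x y)
        = ∑ s2 : S, W s2 a2 * p s2 a2 s' := by
    intro a2 s'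
    rw [← Finset.sum_fiberwise Finset.univ f
      (fun x => ∑ y ∈ Finset.univ.filter (fun y => f y = s'), Nc a2 x y)]
    exact Finset.sum_congr rfl (fun s2 _ => hNfib a2 s2 s')
  have hWa : 0 < W s a := hWpos s a
  have hTpos : (0:ℝ) < ∑ s2 : S, ∑ a2 : A, W s2 a2 := by
    refine Finset.sum_pos (fun s2 _ => Finset.sum_pos (fun a2 _ => hWpos s2 a2) ?_) ?_
    · exact ⟨a, Finset.mem_univ a⟩
    · exact ⟨s, Finset.mem_univ s⟩
  have hDpos : (0:ℝ) < ∑ s2 : S, ∑ a2 : A, W s2 a2 * p s2 a2 s' := by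
    refine Finset.sum_pos (fun s2 _ => Finset.sum_pos
      (fun a2 _ => mul_pos (hWpos s2 a2) ((hp s2 a2).1 s')) ?_) ?_
    · exact ⟨a, Finset.mem_univ a⟩
    · exact ⟨s, Finset.mem_univ s⟩
  constructor
  · rw [hNfib, hNrow, mul_comm, mul_div_assoc, div_self (ne_of_gt hWa), mul_one]
  · have hden : (∑ s2 : S, ∑ a2 : A, m s2 a2 * p s2 a2 s')
        = (∑ s2 : S, ∑ a2 : A, W s2 a2 * p s2 a2 s') / (∑ s2 : S, ∑ a2 : A, W s2 a2) := by
      rw [Finset.sum_div]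
      refine Finset.sum_congr rfl (fun s2 _ => ?_)
      rw [Finset.sum_div]
      refine Finset.sum_congr rfl (fun a2 _ => ?_)
      rw [hm]; ring
    have hden2 : (∑ a2 : A, ∑ x : X, ∑ y ∈ Finset.univ.filter (fun y => f y = s'), Nc a2 x y)
        = ∑ s2 : S, ∑ a2 : A, W s2 a2 * p s2 a2 s' := by
      rw [Finset.sum_congr rfl (fun a2 _ => hNcol a2 s'), Finset.sum_comm]
    rw [hNfib, hden, hden2, hm]
    field_simp
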